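/- Let C be a pointed category with binary products satisfying: for all objects A, B, C', all f : A × B → C', a : X → A, b : X → B, if f ∘ (a, 0) = 0 then f ∘ (a, b) = f ∘ (0, b). Then C has normal projections: for all objects A, B, the projection π₂ : A × B → B is a cokernel of ι₁ = (1_A, 0) : A → A × B. -/

import Mathlib

open CategoryTheory Limits

/-- `q : B ⟶ Q` is a cokernel of `m : A ⟶ B`. -/
def IsCokernelOf {C : Type*} [Category C] [HasZeroMorphisms C]
    {A B Q : C} (m : A ⟶ B) (q : B ⟶ Q) : Prop :=
  m ≫ q = 0 ∧ ∀ ⦃T : C⦄ (f : B ⟶ T), m ≫ f = 0 → ∃! u : Q ⟶ T, f = q ≫ u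

/-- If for all `f : A ⨯ B ⟶ C'`, `a : X ⟶ A`, `b : X ⟶ B`, `(a,0) ≫ f = 0` implies
`(a,b) ≫ f = (0,b) ≫ f`, then every projection `π₂ : A ⨯ B ⟶ B` is a cokernel of
`ι₁ = (1_A, 0)`. -/
theorem stmt5 {C : Type*} [Category C] [HasZeroObject C] [HasZeroMorphisms C]
    [HasBinaryProducts C]
    (H : ∀ ⦃A B C' X : C⦄ (f : A ⨯ B ⟶ C') (a : X ⟶ A) (b : X ⟶ B),
      prod.lift a (0 : X ⟶ B) ≫ f = 0 →
        prod.lift a b ≫ f = prod.lift (0 : X ⟶ A) b ≫ f) :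
    ∀ A B : C, IsCokernelOf (prod.lift (𝟙 A) (0 : A ⟶ B)) (prod.snd : A ⨯ B ⟶ B) := by
  intro A B
  constructor
  · exact prod.lift_snd _ _
  · intro T f hf
    have h0 : prod.lift (prod.fst : A ⨯ B ⟶ A) (0 : A ⨯ B ⟶ B) ≫ f = 0 := by
      have : prod.lift (prod.fst : A ⨯ B ⟶ A) (0 : A ⨯ B ⟶ B)
          = prod.fst ≫ prod.lift (𝟙 A) (0 : A ⟶ B) := by
        ext <;> simp
      rw [this, Category.assoc, hf, comp_zero]
    have key := H f (prod.fst : A ⨯ B ⟶ A) (prod.snd : A ⨯ B ⟶ B) h0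
    simp only [prod.lift_fst_snd, Category.id_comp] at key
    have hlift : prod.lift (0 : A ⨯ B ⟶ A) (prod.snd : A ⨯ B ⟶ B)
        = prod.snd ≫ prod.lift (0 : B ⟶ A) (𝟙 B) := by
      ext <;> simp
    refine ⟨prod.lift (0 : B ⟶ A) (𝟙 B) ≫ f, ?_, ?_⟩
    · show f = prod.snd ≫ _
      rw [← Category.assoc, ← hlift, ← key]
    · intro u hu
      have : prod.lift (0 : B ⟶ A) (𝟙 B) ≫ prod.snd ≫ u = prod.lift (0 : B ⟶ A) (𝟙 B) ≫ f := by
        rw [← hu]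
      rw [← Category.assoc, prod.lift_snd, Category.id_comp] at this
      exact this
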